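/- Let α < α₁ ≤ ⋯ ≤ α_r be positive integers and β = (α₁,…,α_r). For C = 2αα₁ + 1, the tail ∑_{m > (log x)^C, m ∈ 𝒫_β^σ} m^{-1/α} is O(1/(log x)²) as x → ∞. -/

import Mathlib

open Filter Asymptotics Real

/-- The set of integers expressible as `p₁^{β 0} ⋯ p_r^{β (r-1)}` for primes `pᵢ`
(repetitions allowed). -/
def Psigma {r : ℕ} (β : Fin r → ℕ) : Set ℕ :=
  {n | ∃ p : Fin r → ℕ, (∀ i, (p i).Prime) ∧ n = ∏ i, p i ^ β i}

/-- The set of integers expressible as `p₁^{β 0} ⋯ p_r^{β (r-1)}` for pairwise distinct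
primes `pᵢ`. -/
def Ppi {r : ℕ} (β : Fin r → ℕ) : Set ℕ :=
  {n | ∃ p : Fin r → ℕ, (∀ i, (p i).Prime) ∧ Function.Injective p ∧ n = ∏ i, p i ^ β i}

/-- The number of `n ∈ S` with `n ≤ x`. -/
noncomputable def countIn (S : Set ℕ) (x : ℝ) : ℕ :=
  Nat.card {n : ℕ | (n : ℝ) ≤ x ∧ n ∈ S}

lemma summable_pi_prod {ι : Type*} : ∀ {n : ℕ} (f : Fin n → ι → ℝ),
    (∀ i p, 0 ≤ f i p) → (∀ i, Summable (f i)) →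
    Summable (fun p : Fin n → ι => ∏ i, f i (p i)) := by
  intro n
  induction n with
  | zero =>
    intro f _ _
    simpa using summable_of_finite_support (Set.toFinite _)
  | succ n ih =>
    intro f h0 hs
    have hg : Summable (fun q : Fin n → ι => ∏ i, f i.succ (q i)) :=
      ih (fun i => f i.succ) (fun i p => h0 i.succ p) (fun i => hs i.succ)
    have key : Summable (fun x : ι × (Fin n → ι) =>
        f 0 x.1 * ∏ i, f i.succ (x.2 i)) := by
      apply Summable.mul_of_nonneg (hs 0) hg
      · exact fun p => h0 0 p
      · exact fun q => Finset.prod_nonneg fun i _ => h0 i.succ _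
    have h2 := key.comp_injective (Fin.consEquiv fun _ => ι).symm.injective
    refine h2.congr fun p => ?_
    simp [Function.comp, Fin.consEquiv, Fin.prod_univ_succ, Fin.tail]

open scoped Classical in
/-- with `C = 2αα₁ + 1`, the tail `∑_{m > (log x)^C, m ∈ 𝒫_β^σ} m^{-1/α}`
is `O(1/(log x)²)`. -/
theorem tail_bound (r α : ℕ) (β : Fin (r + 1) → ℕ) (hα : 0 < α)
    (hmono : Monotone β) (h : ∀ i, α < β i) :
    (fun x : ℝ =>
        ∑' m : Psigma β,
          if Real.log x ^ (2 * α * β 0 + 1 : ℕ) < ((m : ℕ) : ℝ) then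
            ((m : ℕ) : ℝ) ^ (-(1 : ℝ) / (α : ℝ))
          else 0)
      =O[atTop] (fun x : ℝ => 1 / Real.log x ^ 2) := by
  classical
  set C : ℕ := 2 * α * β 0 + 1 with hCdef
  have haR : (1:ℝ) ≤ (α:ℝ) := by exact_mod_cast hα
  have hapos : (0:ℝ) < (α:ℝ) := lt_of_lt_of_le one_pos haR
  have hCR : ((C:ℕ):ℝ) = 2*(α:ℝ)*((β 0:ℕ):ℝ) + 1 := by rw [hCdef]; push_cast; ring
  have hb0 : (α:ℝ) + 1 ≤ ((β 0:ℕ):ℝ) := by exact_mod_cast (h 0)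
  have hCpos : (0:ℝ) < ((C:ℕ):ℝ) := by rw [hCR]; nlinarith
  set s : ℝ := 1/(α:ℝ) - 2/((C:ℕ):ℝ) with hsdef
  have hsac : s * ((α:ℝ)*((C:ℕ):ℝ)) = ((C:ℕ):ℝ) - 2*(α:ℝ) := by
    rw [hsdef]; field_simp
  have hspos : 0 < s := by nlinarith [mul_pos hapos hCpos]
  have hb0s : 1 < ((β 0:ℕ):ℝ) * s := by nlinarith [mul_pos hapos hCpos]
  have hbs : ∀ i, 1 < ((β i:ℕ):ℝ) * s := by
    intro i
    refine lt_of_lt_of_le hb0s (mul_le_mul_of_nonneg_right ?_ hspos.le)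
    exact_mod_cast hmono (Fin.zero_le i)
  -- choose prime factorizations
  choose p hp1 hp2 using fun m : Psigma β => m.2
  have hmpos : ∀ m : Psigma β, 0 < (m:ℕ) := by
    intro m
    rw [hp2 m]
    exact Finset.prod_pos fun i _ => pow_pos (hp1 m i).pos _
  set ι : Psigma β → (Fin (r+1) → Nat.Primes) := fun m i => ⟨p m i, hp1 m i⟩ with hι
  have hinj : Function.Injective ι := by
    intro m m' hmm
    have hpe : ∀ i, p m i = p m' i := fun i => congrArg Subtype.val (congrFun hmm i)
    apply Subtype.ext
    rw [hp2 m, hp2 m']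
    exact Finset.prod_congr rfl fun i _ => by rw [hpe i]
  have hG : Summable (fun q : Fin (r+1) → Nat.Primes =>
      ∏ i, (((q i) : ℕ):ℝ) ^ (-(((β i:ℕ):ℝ) * s))) := by
    apply summable_pi_prod (fun (i : Fin (r+1)) (q : Nat.Primes) => ((q : ℕ):ℝ) ^ (-(((β i:ℕ):ℝ) * s)))
    · intro i q; positivity
    · intro i
      apply Nat.Primes.summable_rpow.mpr
      have := hbs i; linarith
  have key : ∀ m : Psigma β, ((m:ℕ):ℝ) ^ (-s)
      = ∏ i, (((ι m i) : ℕ):ℝ) ^ (-(((β i:ℕ):ℝ) * s)) := by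
    intro m
    have hcast : ((m:ℕ):ℝ) = ∏ i, ((p m i:ℕ):ℝ) ^ (β i:ℕ) := by
      rw [hp2 m]; push_cast; rfl
    rw [hcast, ← Real.finset_prod_rpow _ _ (fun i _ => by positivity) (-s)]
    refine Finset.prod_congr rfl fun i _ => ?_
    rw [← Real.rpow_natCast ((p m i:ℕ):ℝ) (β i), ← Real.rpow_mul (by positivity)]
    congr 1
    ring
  have hfs : Summable (fun m : Psigma β => ((m:ℕ):ℝ) ^ (-s)) := by
    have := hG.comp_injective hinj
    exact this.congr fun m => (key m).symm
  set K := ∑' m : Psigma β, ((m:ℕ):ℝ) ^ (-s) with hKdef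
  rw [isBigO_iff]
  refine ⟨K, ?_⟩
  filter_upwards [eventually_ge_atTop (Real.exp 1)] with x hx
  have hxpos : (0:ℝ) < x := lt_of_lt_of_le (Real.exp_pos 1) hx
  have hL1 : 1 ≤ Real.log x := (Real.le_log_iff_exp_le hxpos).mpr hx
  have hLpos : (0:ℝ) < Real.log x := lt_of_lt_of_le one_pos hL1
  set L := Real.log x with hLdef
  have hbound : ∀ m : Psigma β,
      (if L ^ C < ((m:ℕ):ℝ) then ((m:ℕ):ℝ) ^ (-(1:ℝ)/(α:ℝ)) else 0)
        ≤ ((m:ℕ):ℝ) ^ (-s) * (1 / L ^ 2) := by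
    intro m
    have hmR : (0:ℝ) < ((m:ℕ):ℝ) := by exact_mod_cast hmpos m
    by_cases hc : L ^ C < ((m:ℕ):ℝ)
    · rw [if_pos hc]
      have h1 : ((m:ℕ):ℝ) ^ (-(1:ℝ)/(α:ℝ))
          = ((m:ℕ):ℝ) ^ (-s) * ((m:ℕ):ℝ) ^ (-(2/((C:ℕ):ℝ))) := by
        rw [← Real.rpow_add hmR]
        congr 1
        rw [hsdef]
        ring
      rw [h1]
      refine mul_le_mul_of_nonneg_left ?_ (Real.rpow_nonneg hmR.le _)
      have hLC : (0:ℝ) < L ^ C := pow_pos hLpos C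
      have h2 : ((m:ℕ):ℝ) ^ (-(2/((C:ℕ):ℝ))) ≤ (L ^ C) ^ (-(2/((C:ℕ):ℝ))) :=
        Real.rpow_le_rpow_of_nonpos hLC hc.le (neg_nonpos.mpr (by positivity))
      refine h2.trans_eq ?_
      rw [← Real.rpow_natCast L C, ← Real.rpow_mul hLpos.le]
      have hc2 : ((C:ℕ):ℝ) * (-(2/((C:ℕ):ℝ))) = -((2:ℕ):ℝ) := by
        field_simp
        ring
      rw [hc2, Real.rpow_neg hLpos.le, Real.rpow_natCast, one_div]
    · rw [if_neg hc]
      positivity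
  have hnn : ∀ m : Psigma β,
      0 ≤ (if L ^ C < ((m:ℕ):ℝ) then ((m:ℕ):ℝ) ^ (-(1:ℝ)/(α:ℝ)) else 0) := by
    intro m
    split <;> positivity
  have hsum2 : Summable (fun m : Psigma β => ((m:ℕ):ℝ) ^ (-s) * (1 / L ^ 2)) :=
    hfs.mul_right _
  have hsum1 : Summable (fun m : Psigma β =>
      if L ^ C < ((m:ℕ):ℝ) then ((m:ℕ):ℝ) ^ (-(1:ℝ)/(α:ℝ)) else 0) :=
    Summable.of_nonneg_of_le hnn hbound hsum2
  have hts : (∑' m : Psigma β,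
      if L ^ C < ((m:ℕ):ℝ) then ((m:ℕ):ℝ) ^ (-(1:ℝ)/(α:ℝ)) else 0)
      ≤ K * (1 / L ^ 2) := by
    calc (∑' m : Psigma β,
        if L ^ C < ((m:ℕ):ℝ) then ((m:ℕ):ℝ) ^ (-(1:ℝ)/(α:ℝ)) else 0)
        ≤ ∑' m : Psigma β, ((m:ℕ):ℝ) ^ (-s) * (1 / L ^ 2) :=
          hsum1.tsum_le_tsum hbound hsum2
      _ = K * (1 / L ^ 2) := by rw [tsum_mul_right]
  have habs : ‖∑' m : Psigma β,
      if L ^ C < ((m:ℕ):ℝ) then ((m:ℕ):ℝ) ^ (-(1:ℝ)/(α:ℝ)) else 0‖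
      = ∑' m : Psigma β,
      if L ^ C < ((m:ℕ):ℝ) then ((m:ℕ):ℝ) ^ (-(1:ℝ)/(α:ℝ)) else 0 := by
    rw [Real.norm_eq_abs, abs_of_nonneg (tsum_nonneg hnn)]
  rw [habs]
  refine hts.trans ?_
  have : ‖1 / L ^ 2‖ = 1 / L ^ 2 := by
    rw [Real.norm_eq_abs, abs_of_nonneg (by positivity)]
  rw [this]
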